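/- Let ψ be an index function in the class S_{C_σ} and let φ be an index function covered by ψ (i.e. there are c > 0 and T̄ > 0 with c·ψ(1/t)/φ(1/t) ≤ min_{1/t ≤ λ ≤ M} ψ(λ)/φ(λ) for all t ≥ T̄). Then φ also belongs to S_{C'_σ} for some constant C'_σ > 0 (with the same exponent σ). -/
import Mathlib


open Set

/-- If ψ is an index function in `S_{C_σ}` and φ is an index function covered by ψ,
then φ belongs to `S_{C'_σ}` for some `C'_σ > 0` (same exponent σ). -/
theorem stmt_4 (φ ψ : ℝ → ℝ) (M σ Cσ c T : ℝ)
    (hM : 0 < M) (hσ : 0 < σ) (hCσ : 0 < Cσ) (hc : 0 < c) (hT : 0 < T)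
    -- index function hypotheses
    (hφpos : ∀ x, 0 < x → 0 < φ x) (hφmono : StrictMonoOn φ (Ioi 0))
    (hφcont : ContinuousOn φ (Ioi 0))
    (hφ0 : Filter.Tendsto φ (nhdsWithin 0 (Ioi 0)) (nhds 0))
    (hψpos : ∀ x, 0 < x → 0 < ψ x) (hψmono : StrictMonoOn ψ (Ioi 0))
    (hψcont : ContinuousOn ψ (Ioi 0))
    (hψ0 : Filter.Tendsto ψ (nhdsWithin 0 (Ioi 0)) (nhds 0))
    -- ψ ∈ S_{C_σ}
    (hψS : ∀ lam ∈ Ioc (0 : ℝ) M, ∀ t : ℝ, 0 < t →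
      ψ lam / ψ (1 / t) ≤ Cσ * Real.exp (lam * t * σ))
    -- φ is covered by ψ
    (hcover : ∀ t : ℝ, T ≤ t → ∀ lam : ℝ, 1 / t ≤ lam → lam ≤ M →
      c * (ψ (1 / t) / φ (1 / t)) ≤ ψ lam / φ lam) :
    ∃ C' : ℝ, 0 < C' ∧ ∀ lam ∈ Ioc (0 : ℝ) M, ∀ t : ℝ, 0 < t →
      φ lam / φ (1 / t) ≤ C' * Real.exp (lam * t * σ) := by
  have hφM : 0 < φ M := hφpos M hM
  have hφT : 0 < φ (1 / T) := hφpos _ (by positivity)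
  refine ⟨Cσ / c + 1 + φ M / φ (1 / T), by positivity, ?_⟩
  rintro lam ⟨hlam0, hlamM⟩ t ht
  have hφl : 0 < φ lam := hφpos _ hlam0
  have h1t : (0:ℝ) < 1 / t := by positivity
  have hφt : 0 < φ (1 / t) := hφpos _ h1t
  have hexp1 : (1:ℝ) ≤ Real.exp (lam * t * σ) := Real.one_le_exp (by positivity)
  have hexp0 : (0:ℝ) < Real.exp (lam * t * σ) := Real.exp_pos _
  set E := Real.exp (lam * t * σ) with hE
  set C' := Cσ / c + 1 + φ M / φ (1 / T) with hC'
  have hCφ : φ M / φ (1 / T) ≤ C' := by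
    rw [hC']; nlinarith [div_pos hCσ hc]
  have hC1 : (1:ℝ) ≤ C' := by
    rw [hC']; nlinarith [div_pos hCσ hc, div_pos hφM hφT]
  by_cases hlt : lam < 1 / t
  · -- small λ: φ λ ≤ φ (1/t)
    have hmono := (hφmono (mem_Ioi.2 hlam0) (mem_Ioi.2 h1t) hlt).le
    have h1 : φ lam / φ (1 / t) ≤ 1 := (div_le_one hφt).2 hmono
    calc φ lam / φ (1 / t) ≤ 1 := h1
      _ ≤ C' * E := by nlinarith
  · push_neg at hlt
    by_cases hTt : T ≤ t
    · -- main case via covering and S_Cσ for ψ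
      have hcov := hcover t hTt lam hlt hlamM
      have hψl : 0 < ψ lam := hψpos _ hlam0
      have hψt : 0 < ψ (1 / t) := hψpos _ h1t
      have hS := hψS lam ⟨hlam0, hlamM⟩ t ht
      -- from hcov: c * ψ(1/t) * φ lam ≤ ψ lam * φ (1/t)
      have key : c * ψ (1 / t) * φ lam ≤ ψ lam * φ (1 / t) := by
        have := (div_le_div_iff₀ hφt hφl).1 (by
          have : c * (ψ (1 / t) / φ (1 / t)) = (c * ψ (1 / t)) / φ (1 / t) := by ring
          rw [this] at hcov; exact hcov)
        nlinarith
      -- φ lam / φ (1/t) ≤ (1/c) * (ψ lam / ψ (1/t))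
      have h2 : φ lam / φ (1 / t) ≤ (ψ lam / ψ (1 / t)) / c := by
        rw [div_le_div_iff₀ hφt hc, div_mul_eq_mul_div, le_div_iff₀ hψt]
        nlinarith
      have h3 : (ψ lam / ψ (1 / t)) / c ≤ (Cσ * E) / c :=
        div_le_div_of_nonneg_right hS hc.le
      calc φ lam / φ (1 / t) ≤ (Cσ * E) / c := h2.trans h3
        _ = Cσ / c * E := by ring
        _ ≤ C' * E := mul_le_mul_of_nonneg_right
            (by rw [hC']; nlinarith [div_pos hφM hφT]) hexp0.le
    · -- t < T: uniform bound φ M / φ (1/T)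
      push_neg at hTt
      have h1T : (1:ℝ) / T ≤ 1 / t := by
        apply one_div_le_one_div_of_le ht hTt.le
      have hφtT : φ (1 / T) ≤ φ (1 / t) := by
        rcases eq_or_lt_of_le h1T with h | h
        · rw [h]
        · exact (hφmono (mem_Ioi.2 (by positivity)) (mem_Ioi.2 h1t) h).le
      have hφlM : φ lam ≤ φ M := by
        rcases eq_or_lt_of_le hlamM with h | h
        · rw [h]
        · exact (hφmono (mem_Ioi.2 hlam0) (mem_Ioi.2 hM) h).le
      have h4 : φ lam / φ (1 / t) ≤ φ M / φ (1 / T) :=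
        div_le_div₀ (le_of_lt hφM) hφlM hφT hφtT
      calc φ lam / φ (1 / t) ≤ φ M / φ (1 / T) := h4
        _ ≤ C' := hCφ
        _ ≤ C' * E := by nlinarith
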